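/- Assume φ₁(𝒞,𝒯,𝐄). For every chain {(a_n, 𝒜ⁿ) : n < ω} in (𝒞, ≺) (a strictly ⪯-increasing ω-sequence), the intersection ⋂_{n<ω} (⋃𝒜ⁿ) is empty. -/

import Mathlib

noncomputable def omega1 : Ordinal.{0} := (Cardinal.aleph 1).ord

/-- An element of the damage control collection `𝒞`: a pair `(a, 𝒜)` where `a` is a finite
root and `𝒜 ⊆ [ω₁]^N` is a family, represented by functions `ℕ → Ordinal` normalized to `0`
beyond the first `N` coordinates. -/
structure DCE : Type 1 where
  root : Finset Ordinal.{0}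
  N : ℕ
  fam : Set (ℕ → Ordinal.{0})

namespace DCE

/-- The `i`-th column `𝒜_i = {c(i) : c ∈ 𝒜}`. -/
def col (E : DCE) (i : ℕ) : Set Ordinal.{0} := (fun c => c i) '' E.fam

/-- `⋃𝒜`, the set of all entries of members of the family. -/
def unionSet (E : DCE) : Set Ordinal.{0} := {x | ∃ c ∈ E.fam, ∃ i, i < E.N ∧ c i = x}

/-- Validity (condition (C1)): `𝒜 ⊆ [ω₁]^N` is an uncountable non-overlapping family of
increasing `N`-tuples, normalized, and the root lies below all of `⋃𝒜`. -/
def Valid (E : DCE) : Prop :=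
  1 ≤ E.N ∧ ¬E.fam.Countable ∧
  (∀ c ∈ E.fam, ∀ i j : ℕ, i < j → j < E.N → c i < c j) ∧
  (∀ c ∈ E.fam, ∀ i : ℕ, E.N ≤ i → c i = 0) ∧
  (∀ c ∈ E.fam, ∀ i : ℕ, i < E.N → c i < omega1) ∧
  (∀ c ∈ E.fam, ∀ d ∈ E.fam, c ≠ d →
    (∀ i, i < E.N → ∀ j, j < E.N → c i < d j) ∨
    (∀ i, i < E.N → ∀ j, j < E.N → d i < c j)) ∧
  (∀ x ∈ E.root, x < omega1) ∧
  (∀ x ∈ E.root, ∀ c ∈ E.fam, ∀ i, i < E.N → x < c i)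

/-- `c[I]`, the restriction of `c : ℕ → Ordinal` along the index map `I`, normalized. -/
def reindex (NA : ℕ) (I : ℕ → ℕ) (c : ℕ → Ordinal.{0}) : ℕ → Ordinal.{0} :=
  fun j => if j < NA then c (I j) else 0

/-- The copy structure of `𝒜 ⪯ ℬ`: a (nonempty) finite set `𝕀` of strictly increasing index
maps `[N_𝒜] → [N_ℬ]` with `c[I] ∈ 𝒜` for every `c ∈ ℬ`, `I ∈ 𝕀`, and with all coordinates of
members of `ℬ` outside `⋃_{I ∈ 𝕀} ran I` avoiding `⋃𝒜`. -/
def Copies (E F : DCE) (𝕀 : Finset (ℕ → ℕ)) : Prop :=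
  𝕀.Nonempty ∧
  (∀ I ∈ 𝕀, (∀ i j : ℕ, i < j → j < E.N → I i < I j) ∧ ∀ i, i < E.N → I i < F.N) ∧
  (∀ c ∈ F.fam, ∀ I ∈ 𝕀, reindex E.N I c ∈ E.fam) ∧
  (∀ c ∈ F.fam, ∀ j, j < F.N → (∀ I ∈ 𝕀, ∀ i, i < E.N → I i ≠ j) → c j ∉ E.unionSet)

/-- The exact copy structure required in (C2): moreover `[c]^{N_𝒜} ∩ 𝒜 = {c[I] : I ∈ 𝕀}`. -/
def Exact (E F : DCE) (𝕀 : Finset (ℕ → ℕ)) : Prop :=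
  Copies E F 𝕀 ∧
  ∀ c ∈ F.fam, ∀ d ∈ E.fam, (∀ i, i < E.N → ∃ j, j < F.N ∧ d i = c j) →
    ∃ I ∈ 𝕀, d = reindex E.N I c

/-- `(a,𝒜) ⪯ (b,ℬ)`. -/
def le (E F : DCE) : Prop := E.root ⊆ F.root ∧ ∃ 𝕀 : Finset (ℕ → ℕ), Copies E F 𝕀

/-- `(a,𝒜) ≺ (b,ℬ)`. -/
def lt (E F : DCE) : Prop := le E F ∧ E ≠ F

/-- The trivial element `(∅, [ω₁]¹)`. -/
def trivialDCE : DCE where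
  root := ∅
  N := 1
  fam := {c | ∃ α : Ordinal.{0}, α < omega1 ∧ c = fun j => if j = 0 then α else 0}

/-- The tree `𝒯` of all columns of members of `𝒞`. -/
def Tset (𝒞 : Set DCE) : Set (Set Ordinal.{0}) :=
  {X | ∃ E ∈ 𝒞, ∃ i, i < E.N ∧ X = E.col i}

/-- The damage control axioms `φ₁(𝒞,𝒯,𝐄)` (with `𝒯` and `𝐄` induced from `𝒞`):
(C1) the trivial element belongs to `𝒞` and every member is valid; (C2) column containment
implies the exact copy structure; (T1) every node of `𝒯` has only finitely many strict
supersets in `𝒯`; (T3) `⊆`-incomparable members of `𝒯` have countable intersection;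
(T4) for `Y ⊊ X` in `𝒯`, the increasing enumerations satisfy `X(α) < Y(α)` for all `α < ω₁`. -/
def phi1 (𝒞 : Set DCE) : Prop :=
  trivialDCE ∈ 𝒞 ∧
  (∀ E ∈ 𝒞, E.Valid) ∧
  (∀ E ∈ 𝒞, ∀ F ∈ 𝒞, (∃ i, i < F.N ∧ ∃ j, j < E.N ∧ F.col i ⊆ E.col j) →
    E.root ⊆ F.root ∧ ∃ 𝕀 : Finset (ℕ → ℕ), Exact E F 𝕀) ∧
  (∀ X ∈ Tset 𝒞, {Y ∈ Tset 𝒞 | X ⊂ Y}.Finite) ∧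
  (∀ X ∈ Tset 𝒞, ∀ Y ∈ Tset 𝒞, ¬X ⊆ Y → ¬Y ⊆ X → (X ∩ Y).Countable) ∧
  (∀ X ∈ Tset 𝒞, ∀ Y ∈ Tset 𝒞, Y ⊆ X → Y ≠ X → ∀ α, α < omega1 →
    Ordinal.enumOrd X α < Ordinal.enumOrd Y α)

end DCE


section DCEAux
open Ordinal Set

namespace DCEAux

lemma not_bddAbove_union_Ici (s : Set Ordinal.{0}) (ξ : Ordinal.{0}) :
    ¬ BddAbove (s ∪ Set.Ici (ξ + 1)) := by
  rintro ⟨b, hb⟩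
  have h1 : max (ξ + 1) (b + 1) ∈ s ∪ Set.Ici (ξ + 1) := Or.inr (Set.mem_Ici.2 (le_max_left _ _))
  have h2 := hb h1
  have h3 : b + 1 ≤ max (ξ + 1) (b + 1) := le_max_right _ _
  exact absurd (h3.trans h2) (by simp [Order.add_one_le_iff])

/-- Transfer: `enumOrd` of the unboundedized set agrees with `enumOrd s` while values stay `≤ ξ`. -/
lemma enumOrd_union_eq (s : Set Ordinal.{0}) (ξ : Ordinal.{0}) :
    ∀ β, enumOrd (s ∪ Set.Ici (ξ + 1)) β ≤ ξ →
      enumOrd s β = enumOrd (s ∪ Set.Ici (ξ + 1)) β := by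
  intro β
  induction β using Ordinal.induction with
  | _ β IH =>
    intro hβ
    set t := s ∪ Set.Ici (ξ + 1) with ht_def
    have ht : ¬ BddAbove t := not_bddAbove_union_Ici s ξ
    have hA : ∀ c, c < β → enumOrd s c = enumOrd t c := fun c hc =>
      IH c hc (le_of_lt (lt_of_lt_of_le (enumOrd_strictMono ht hc) hβ))
    have hsetEq : {b | ∀ c, c < β → enumOrd s c < b} = {b | ∀ c, c < β → enumOrd t c < b} := by
      ext b
      constructor
      · intro H c hc; rw [← hA c hc]; exact H c hc
      · intro H c hc; rw [hA c hc]; exact H c hc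
    set A := {b | ∀ c, c < β → enumOrd t c < b} with hA_def
    have hy_eq : enumOrd t β = sInf (t ∩ A) := by rw [enumOrd]
    have hyt : enumOrd t β ∈ t := enumOrd_mem ht β
    have hyA : enumOrd t β ∈ A := fun c hc => enumOrd_strictMono ht hc
    have hys : enumOrd t β ∈ s := by
      rcases hyt with h' | h'
      · exact h'
      · exact absurd (le_trans h' hβ) (by simp [Order.add_one_le_iff])
    rw [enumOrd, hsetEq]
    have h1 : sInf (s ∩ A) ≤ sInf (t ∩ A) := by
      rw [← hy_eq]
      exact csInf_le' (Set.mem_inter hys hyA)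
    have h2 : sInf (t ∩ A) ≤ sInf (s ∩ A) :=
      csInf_le_csInf' ⟨enumOrd t β, Set.mem_inter hys hyA⟩
        (fun x hx => Set.mem_inter (Or.inl hx.1) hx.2)
    rw [hy_eq]
    exact le_antisymm h1 h2

/-- The position of `ξ` in `s`. -/
noncomputable def posIn (s : Set Ordinal.{0}) (ξ : Ordinal.{0}) : Ordinal.{0} :=
  sInf {a | Ordinal.enumOrd (s ∪ Set.Ici (ξ + 1)) a = ξ}

lemma posIn_spec {s : Set Ordinal.{0}} {ξ : Ordinal.{0}} (hξ : ξ ∈ s) :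
    enumOrd (s ∪ Set.Ici (ξ + 1)) (posIn s ξ) = ξ := by
  have := enumOrd_surjective (not_bddAbove_union_Ici s ξ) (Or.inl hξ : ξ ∈ s ∪ Set.Ici (ξ+1))
  exact csInf_mem this

lemma posIn_le {s : Set Ordinal.{0}} {ξ : Ordinal.{0}} (hξ : ξ ∈ s) : posIn s ξ ≤ ξ :=
  (le_enumOrd_self (not_bddAbove_union_Ici s ξ)).trans (posIn_spec hξ).le

lemma enumOrd_posIn {s : Set Ordinal.{0}} {ξ : Ordinal.{0}} (hξ : ξ ∈ s) :
    enumOrd s (posIn s ξ) = ξ := by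
  rw [enumOrd_union_eq s ξ _ (posIn_spec hξ).le]
  exact posIn_spec hξ

lemma posIn_lt_posIn {X Y : Set Ordinal.{0}} {ξ : Ordinal.{0}} (hξY : ξ ∈ Y) (hYX : Y ⊆ X)
    (hlt : enumOrd X (posIn Y ξ) < ξ) : posIn Y ξ < posIn X ξ := by
  have hξX : ξ ∈ X := hYX hξY
  have htX := not_bddAbove_union_Ici X ξ
  have htY := not_bddAbove_union_Ici Y ξ
  have hsub : Y ∪ Set.Ici (ξ + 1) ⊆ X ∪ Set.Ici (ξ + 1) := Set.union_subset_union_left _ hYX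
  have hle : posIn Y ξ ≤ posIn X ξ := by
    have h1 : enumOrd (X ∪ Set.Ici (ξ + 1)) (posIn Y ξ) ≤ ξ :=
      (enumOrd_le_of_subset htY hsub (posIn Y ξ)).trans (posIn_spec hξY).le
    have h2 : enumOrd (X ∪ Set.Ici (ξ + 1)) (posIn Y ξ) ≤
        enumOrd (X ∪ Set.Ici (ξ + 1)) (posIn X ξ) := h1.trans_eq (posIn_spec hξX).symm
    exact (enumOrd_le_enumOrd htX).mp h2
  rcases hle.lt_or_eq with h | h
  · exact h
  · exfalso
    have := enumOrd_posIn hξX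
    rw [h, this] at hlt
    exact lt_irrefl _ hlt

lemma nat_le_incr {I : ℕ → ℕ} {N : ℕ} (h : ∀ i j : ℕ, i < j → j < N → I i < I j) :
    ∀ i, i < N → i ≤ I i := by
  intro i
  induction i with
  | zero => intro _; exact Nat.zero_le _
  | succ n ih =>
    intro hn
    have h1 : n ≤ I n := ih (Nat.lt_of_succ_lt hn)
    have h2 : I n < I (n + 1) := h n (n + 1) (Nat.lt_succ_self n) hn
    omega

lemma nat_incr_id {I : ℕ → ℕ} {N : ℕ} (h : ∀ i j : ℕ, i < j → j < N → I i < I j)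
    (hb : ∀ i, i < N → I i < N) : ∀ i, i < N → I i = i := by
  have key : ∀ d i, i < N → N ≤ i + d + 1 → I i ≤ i := by
    intro d
    induction d with
    | zero => intro i hi hNi; have := hb i hi; omega
    | succ d ih =>
      intro i hi hNi
      by_cases hsi : i + 1 < N
      · have h1 : I i < I (i + 1) := h i (i + 1) (Nat.lt_succ_self i) hsi
        have h2 : I (i + 1) ≤ i + 1 := ih (i + 1) hsi (by omega)
        omega
      · have := hb i hi; omega
  intro i hi
  exact le_antisymm (key N i hi (by omega)) (nat_le_incr h i hi)

lemma DCE_ext {a b : DCE} (h1 : a.root = b.root) (h2 : a.N = b.N) (h3 : a.fam = b.fam) :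
    a = b := by
  cases a; cases b; cases h1; cases h2; cases h3; rfl

end DCEAux
end DCEAux

/-- Lemma 7.f: under `φ₁(𝒞,𝒯,𝐄)`, for every strictly `⪯`-increasing `ω`-chain
`{(a_n,𝒜ⁿ) : n < ω}` in `(𝒞,≺)`, the intersection `⋂_{n<ω} ⋃𝒜ⁿ` is empty. -/
theorem dce_chain_inter_empty (𝒞 : Set DCE) (h : DCE.phi1 𝒞)
    (E : ℕ → DCE) (hE : ∀ k, E k ∈ 𝒞)
    (hchain : ∀ k, DCE.lt (E k) (E (k + 1))) :
    (⋂ k, (E k).unionSet) = ∅ := by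
  classical
  by_contra hne
  obtain ⟨ξ, hξ⟩ := Set.nonempty_iff_ne_empty.2 hne
  have hmem : ∀ k, ξ ∈ (E k).unionSet := fun k => Set.mem_iInter.1 hξ k
  have hξω : ξ < omega1 := by
    obtain ⟨c, hc, i, hi, hci⟩ := hmem 0
    have := (h.2.1 _ (hE 0)).2.2.2.2.1 c hc i hi
    rwa [hci] at this
  have hcolmem : ∀ k, ∃ j, j < (E k).N ∧ ξ ∈ (E k).col j := by
    intro k
    obtain ⟨c, hc, i, hi, hci⟩ := hmem k
    exact ⟨i, hi, ⟨c, hc, hci⟩⟩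
  set A : ℕ → Finset ℕ :=
    fun n => (Finset.range (E n).N).filter (fun j => ξ ∈ (E n).col j) with hA
  set α : ℕ → Ordinal.{0} :=
    fun n => (A n).sup (fun j => DCEAux.posIn ((E n).col j) ξ) with hαdef
  have hAne : ∀ n, (A n).Nonempty := by
    intro n
    obtain ⟨j, hj, hjc⟩ := hcolmem n
    exact ⟨j, Finset.mem_filter.2 ⟨Finset.mem_range.2 hj, hjc⟩⟩
  have hstep : ∀ n, α (n + 1) < α n := by
    intro n
    obtain ⟨j, hjA, hjsup⟩ := Finset.exists_mem_eq_sup (A (n + 1)) (hAne (n + 1))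
      (fun j => DCEAux.posIn ((E (n + 1)).col j) ξ)
    have hj : j < (E (n + 1)).N := Finset.mem_range.1 (Finset.mem_filter.1 hjA).1
    have hjcol : ξ ∈ (E (n + 1)).col j := (Finset.mem_filter.1 hjA).2
    obtain ⟨c, hc, hcj⟩ := hjcol
    have hcj' : c j = ξ := hcj
    obtain ⟨⟨hroot, 𝕀, hIne, hImaps, hIre, hIav⟩, hEne⟩ := hchain n
    have hIij : ∃ I ∈ 𝕀, ∃ i, i < (E n).N ∧ I i = j := by
      by_contra hcon
      push_neg at hcon
      have hav := hIav c hc j hj (fun I hI i hi => hcon I hI i hi)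
      rw [hcj'] at hav
      exact hav (hmem n)
    obtain ⟨I, hI𝕀, i, hi, hIi⟩ := hIij
    have hYX : (E (n + 1)).col j ⊆ (E n).col i := by
      rintro x ⟨c', hc', hx⟩
      refine ⟨DCE.reindex (E n).N I c', hIre c' hc' I hI𝕀, ?_⟩
      show DCE.reindex (E n).N I c' i = x
      simp only [DCE.reindex, if_pos hi, hIi]
      exact hx
    have hξY : ξ ∈ (E (n + 1)).col j := ⟨c, hc, hcj⟩
    have hξX : ξ ∈ (E n).col i := hYX hξY
    have hYne : (E (n + 1)).col j ≠ (E n).col i := by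
      intro heq
      apply hEne
      obtain ⟨hroot', 𝕁, ⟨⟨hJne, hJmaps, hJre, _⟩, _⟩⟩ :=
        h.2.2.1 (E (n + 1)) (hE (n + 1)) (E n) (hE n) ⟨i, hi, j, hj, heq.symm.subset⟩
      have hN1n : 1 ≤ (E n).N := (h.2.1 _ (hE n)).1
      have hN1n1 : 1 ≤ (E (n + 1)).N := (h.2.1 _ (hE (n + 1))).1
      obtain ⟨I0, hI0⟩ := hIne
      have hNle : (E n).N ≤ (E (n + 1)).N := by
        have h1 := DCEAux.nat_le_incr (hImaps I0 hI0).1 ((E n).N - 1) (by omega)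
        have h2 := (hImaps I0 hI0).2 ((E n).N - 1) (by omega)
        omega
      obtain ⟨J0, hJ0⟩ := hJne
      have hNge : (E (n + 1)).N ≤ (E n).N := by
        have h1 := DCEAux.nat_le_incr (hJmaps J0 hJ0).1 ((E (n + 1)).N - 1) (by omega)
        have h2 := (hJmaps J0 hJ0).2 ((E (n + 1)).N - 1) (by omega)
        omega
      have hNN : (E n).N = (E (n + 1)).N := le_antisymm hNle hNge
      have hfam : (E n).fam = (E (n + 1)).fam := by
        apply Set.Subset.antisymm
        · intro c' hc'
          have hmem' := hJre c' hc' J0 hJ0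
          have hid := DCEAux.nat_incr_id (hJmaps J0 hJ0).1
            (fun a ha => by have := (hJmaps J0 hJ0).2 a ha; omega)
          have hre : DCE.reindex (E (n + 1)).N J0 c' = c' := by
            funext m
            by_cases hm : m < (E (n + 1)).N
            · simp only [DCE.reindex, if_pos hm, hid m hm]
            · simp only [DCE.reindex, if_neg hm]
              exact ((h.2.1 _ (hE n)).2.2.2.1 c' hc' m (by omega)).symm
          rwa [hre] at hmem'
        · intro c' hc'
          have hmem' := hIre c' hc' I0 hI0
          have hid := DCEAux.nat_incr_id (hImaps I0 hI0).1
            (fun a ha => by have := (hImaps I0 hI0).2 a ha; omega)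
          have hre : DCE.reindex (E n).N I0 c' = c' := by
            funext m
            by_cases hm : m < (E n).N
            · simp only [DCE.reindex, if_pos hm, hid m hm]
            · simp only [DCE.reindex, if_neg hm]
              exact ((h.2.1 _ (hE (n + 1))).2.2.2.1 c' hc' m (by omega)).symm
          rwa [hre] at hmem'
      exact DCEAux.DCE_ext (Finset.Subset.antisymm hroot hroot') hNN hfam
    have hXT : (E n).col i ∈ DCE.Tset 𝒞 := ⟨E n, hE n, i, hi, rfl⟩
    have hYT : (E (n + 1)).col j ∈ DCE.Tset 𝒞 := ⟨E (n + 1), hE (n + 1), j, hj, rfl⟩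
    have hαω : DCEAux.posIn ((E (n + 1)).col j) ξ < omega1 :=
      lt_of_le_of_lt (DCEAux.posIn_le hξY) hξω
    have hT4 := h.2.2.2.2.2 _ hXT _ hYT hYX hYne _ hαω
    rw [DCEAux.enumOrd_posIn hξY] at hT4
    have hfin : DCEAux.posIn ((E (n + 1)).col j) ξ < DCEAux.posIn ((E n).col i) ξ :=
      DCEAux.posIn_lt_posIn hξY hYX hT4
    have hiA : i ∈ A n := Finset.mem_filter.2 ⟨Finset.mem_range.2 hi, hξX⟩
    have hsup : DCEAux.posIn ((E n).col i) ξ ≤ α n :=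
      Finset.le_sup (f := fun j => DCEAux.posIn ((E n).col j) ξ) hiA
    have : α (n + 1) = DCEAux.posIn ((E (n + 1)).col j) ξ := hjsup
    rw [this]
    exact lt_of_lt_of_le hfin hsup
  obtain ⟨a, ⟨m, hm⟩, hmin⟩ := Ordinal.lt_wf.has_min (Set.range α) ⟨α 0, 0, rfl⟩
  exact hmin (α (m + 1)) ⟨m + 1, rfl⟩ (hm ▸ hstep m)
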